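/- Let r be an odd prime and let k be a multiple of r with k ≥ 2r. Then every coloring χ : {1,…,kr−r} → ℤ/rℤ admits an r-zero-sum solution to the equation E; equivalently, S_z(k,r) ≤ kr − r. -/

import Mathlib

/-- `hasZeroSumSolution k r N χ` says the coloring `χ` of `{1,…,N}` by `ZMod r`
admits an `r`-zero-sum solution to `x₁ + ⋯ + x_{k-1} = x_k`. -/
def hasZeroSumSolution (k r N : ℕ) (χ : ℕ → ZMod r) : Prop :=
  ∃ (x : Fin (k - 1) → ℕ) (y : ℕ),
    (∀ i, 1 ≤ x i ∧ x i ≤ N) ∧ (1 ≤ y ∧ y ≤ N) ∧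
    (∑ i, x i) = y ∧
    (∑ i, χ (x i)) + χ y = 0

lemma listSumFin {M : Type*} [AddCommMonoid M] (f : ℕ → M) (L : List ℕ) {n : ℕ}
    (h : L.length = n) :
    ∑ i : Fin n, f (L.get (Fin.cast h.symm i)) = (L.map f).sum := by
  subst h
  suffices H : ∀ (L : List ℕ), ∑ i : Fin L.length, f (L.get i) = (L.map f).sum by
    exact H L
  intro L
  induction L with
  | nil => simp
  | cons a t ih =>
      show ∑ i : Fin (t.length + 1), f ((a :: t).get (Fin.cast rfl i)) = _
      rw [Fin.sum_univ_succ, List.map_cons, List.sum_cons, ← ih]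
      rfl

lemma exists_sol_list (k r N : ℕ) (χ : ℕ → ZMod r) (L : List ℕ) (y : ℕ)
    (hlen : L.length = k - 1)
    (hmem : ∀ v ∈ L, 1 ≤ v ∧ v ≤ N)
    (hsum : L.sum = y) (hy1 : 1 ≤ y) (hyN : y ≤ N)
    (hχ : (L.map χ).sum + χ y = 0) : hasZeroSumSolution k r N χ := by
  refine ⟨fun i => L.get (Fin.cast hlen.symm i), y, ?_, ⟨hy1, hyN⟩, ?_, ?_⟩
  · intro i
    exact hmem _ (List.get_mem _ _)
  · rw [listSumFin (fun t => t) L hlen,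
      show L.map (fun t => t) = L from List.map_id _, hsum]
  · rw [listSumFin χ L hlen, hχ]

lemma exists_sol (k r N : ℕ) (χ : ℕ → ZMod r) (p j q m v₁ v₂ v₃ v₄ y : ℕ)
    (hcnt : p + j + q + m = k - 1)
    (hb1 : 1 ≤ v₁) (hb1' : v₁ ≤ N) (hb2 : 1 ≤ v₂) (hb2' : v₂ ≤ N)
    (hb3 : 1 ≤ v₃) (hb3' : v₃ ≤ N) (hb4 : 1 ≤ v₄) (hb4' : v₄ ≤ N)
    (hy : p * v₁ + j * v₂ + q * v₃ + m * v₄ = y) (hy1 : 1 ≤ y) (hyN : y ≤ N)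
    (hχ : (p : ZMod r) * χ v₁ + (j : ZMod r) * χ v₂ + (q : ZMod r) * χ v₃
        + (m : ZMod r) * χ v₄ + χ y = 0) :
    hasZeroSumSolution k r N χ := by
  apply exists_sol_list k r N χ
    (List.replicate p v₁ ++ List.replicate j v₂ ++ List.replicate q v₃
      ++ List.replicate m v₄) y
  · simp only [List.length_append, List.length_replicate]
    omega
  · intro v hv
    simp only [List.mem_append, List.mem_replicate] at hv
    rcases hv with ((⟨-, rfl⟩ | ⟨-, rfl⟩) | ⟨-, rfl⟩) | ⟨-, rfl⟩
    · exact ⟨hb1, hb1'⟩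
    · exact ⟨hb2, hb2'⟩
    · exact ⟨hb3, hb3'⟩
    · exact ⟨hb4, hb4'⟩
  · simp only [List.sum_append, List.sum_replicate, smul_eq_mul]
    exact hy
  · exact hy1
  · exact hyN
  · simp only [List.map_append, List.map_replicate, List.sum_append,
      List.sum_replicate, nsmul_eq_mul]
    exact hχ

theorem zero_sum_schur_upper_prime (r k : ℕ) (hrp : r.Prime) (hodd : Odd r)
    (hdvd : r ∣ k) (hk : 2 * r ≤ k) (χ : ℕ → ZMod r) :
    hasZeroSumSolution k r (k * r - r) χ := by
  haveI : Fact r.Prime := ⟨hrp⟩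
  haveI : NeZero r := ⟨hrp.ne_zero⟩
  have hr2 : 2 ≤ r := hrp.two_le
  have hr0 : ((r : ℕ) : ZMod r) = 0 := ZMod.natCast_self r
  have hk0 : ((k : ℕ) : ZMod r) = 0 := (ZMod.natCast_eq_zero_iff k r).mpr hdvd
  have hkk : 2 * k ≤ k * r := by
    calc 2 * k ≤ r * k := Nat.mul_le_mul_right k hr2
    _ = k * r := mul_comm r k
  obtain ⟨K, hKdef⟩ : ∃ K, K = k * r := ⟨_, rfl⟩
  rw [← hKdef] at hkk ⊢
  by_cases hA : ∃ δ, 1 ≤ δ ∧ δ ≤ k - 1 ∧ χ (k - δ) + χ (1 + δ) ≠ χ k + χ 1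
  · obtain ⟨δ, hδ1, hδ2, hwne⟩ := hA
    have hw0 : χ (k - δ) + χ (1 + δ) - (χ k + χ 1) ≠ 0 := sub_ne_zero.mpr hwne
    set t : ZMod r := (χ k - χ (K - r)) * (χ (k - δ) + χ (1 + δ) - (χ k + χ 1))⁻¹
      with htdef
    set j : ℕ := t.val with hjdef
    have hjr : j < r := ZMod.val_lt t
    have hjt : ((j : ℕ) : ZMod r) = t := ZMod.natCast_rightInverse t
    have hmw : t * (χ (k - δ) + χ (1 + δ) - (χ k + χ 1)) = χ k - χ (K - r) := by
      rw [htdef, mul_assoc, inv_mul_cancel₀ hw0, mul_one]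
    apply exists_sol k r (K - r) χ (r - 1 - j) j j (k - r - j) k (k - δ) (1 + δ) 1 (K - r)
    · omega
    · omega
    · omega
    · omega
    · omega
    · omega
    · omega
    · omega
    · omega
    · rw [hKdef]
      zify [show δ ≤ k by omega, show j ≤ r - 1 by omega, show (1:ℕ) ≤ r by omega,
        show j ≤ k - r by omega, show r ≤ k by omega, show r ≤ k * r by nlinarith]
      ring
    · omega
    · omega
    · rw [Nat.cast_sub (show j ≤ r - 1 by omega), Nat.cast_sub (show 1 ≤ r by omega),
        Nat.cast_sub (show j ≤ k - r by omega), Nat.cast_sub (show r ≤ k by omega),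
        hr0, hk0, hjt]
      push_cast
      linear_combination hmw
  · by_cases hB : ∃ δ, 1 ≤ δ ∧ δ ≤ k - 2 ∧ χ (k - 1 - δ) + χ (1 + δ) ≠ χ (k - 1) + χ 1
    · obtain ⟨δ, hδ1, hδ2, hwne⟩ := hB
      have hw0 : χ (k - 1 - δ) + χ (1 + δ) - (χ (k - 1) + χ 1) ≠ 0 := sub_ne_zero.mpr hwne
      set t : ZMod r := (χ (k - 1) - χ (K - 2 * r + 1))
          * (χ (k - 1 - δ) + χ (1 + δ) - (χ (k - 1) + χ 1))⁻¹ with htdef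
      set j : ℕ := t.val with hjdef
      have hjr : j < r := ZMod.val_lt t
      have hjt : ((j : ℕ) : ZMod r) = t := ZMod.natCast_rightInverse t
      have hmw : t * (χ (k - 1 - δ) + χ (1 + δ) - (χ (k - 1) + χ 1))
          = χ (k - 1) - χ (K - 2 * r + 1) := by
        rw [htdef, mul_assoc, inv_mul_cancel₀ hw0, mul_one]
      apply exists_sol k r (K - r) χ (r - 1 - j) j j (k - r - j) (k - 1) (k - 1 - δ)
        (1 + δ) 1 (K - 2 * r + 1)
      · omega
      · omega
      · omega
      · omega
      · omega
      · omega
      · omega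
      · omega
      · omega
      · rw [hKdef]
        zify [show δ ≤ k - 1 by omega, show (1:ℕ) ≤ k by omega,
          show j ≤ r - 1 by omega, show (1:ℕ) ≤ r by omega,
          show j ≤ k - r by omega, show r ≤ k by omega,
          show 2 * r ≤ k * r by nlinarith]
        ring
      · omega
      · omega
      · rw [Nat.cast_sub (show j ≤ r - 1 by omega), Nat.cast_sub (show 1 ≤ r by omega),
          Nat.cast_sub (show j ≤ k - r by omega), Nat.cast_sub (show r ≤ k by omega),
          hr0, hk0, hjt]
        push_cast
        linear_combination hmw
    · push_neg at hA hB
      have step : ∀ u, 2 ≤ u → u ≤ k - 1 → χ u = χ (u - 1) + (χ k - χ (k - 1)) := by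
        intro u hu2 huk
        have h1 := hA (k - u) (by omega) (by omega)
        have h2 := hB (k - u) (by omega) (by omega)
        rw [show k - (k - u) = u by omega] at h1
        rw [show k - 1 - (k - u) = u - 1 by omega] at h2
        linear_combination h1 - h2
      have affine : ∀ u, 1 ≤ u → u ≤ k - 1 →
          χ u = χ 1 + ((u - 1 : ℕ) : ZMod r) * (χ k - χ (k - 1)) := by
        intro u
        induction u with
        | zero => intro h _; omega
        | succ n ih =>
          intro h1 h2
          by_cases hn : n = 0
          · subst hn; simp
          · have hih := ih (by omega) (by omega)
            have hstep := step (n + 1) (by omega) (by omega)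
            rw [show n + 1 - 1 = n from rfl] at hstep ⊢
            rw [hih] at hstep
            rw [hstep]
            have hcast : ((n - 1 : ℕ) : ZMod r) + 1 = (n : ZMod r) := by
              rw [Nat.cast_sub (show 1 ≤ n by omega)]; push_cast; ring
            linear_combination (χ k - χ (k - 1)) * hcast
      have hd := affine (k - 1) (by omega) le_rfl
      rw [show k - 1 - 1 = k - 2 by omega] at hd
      have h2 := affine 2 (by omega) (by omega)
      rw [show (2 : ℕ) - 1 = 1 from rfl] at h2
      have hc2 : ((k - 2 : ℕ) : ZMod r) = -2 := by
        rw [Nat.cast_sub (show 2 ≤ k by omega), hk0]; push_cast; ring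
      rw [hc2] at hd
      apply exists_sol k r (K - r) χ 1 0 0 (k - 2) 2 1 1 1 k
      · omega
      · omega
      · omega
      · omega
      · omega
      · omega
      · omega
      · omega
      · omega
      · omega
      · omega
      · omega
      · rw [hc2]
        push_cast at h2 ⊢
        linear_combination h2 + hd
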